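/- Let φ be a diffuse submeasure on a Boolean algebra 𝒜 that is a nonzero measure (finitely additive). Then lim_{ξ→0⁺} h_φ(ξ) = 1/φ(1). -/

import Mathlib

/-- The "atom" of the subalgebra generated by the finite sequence `C`,
corresponding to a choice `s` of sides. -/
def atomOf {α : Type*} [BooleanAlgebra α] {m : ℕ} (C : Fin m → α) (s : Fin m → Bool) : α :=
  Finset.univ.inf (fun i => if s i then C i else (C i)ᶜ)

/-- The covering multiplicity of a finite sequence in a Boolean algebra: the largest `k`
such that every nonzero atom of the generated subalgebra lies below at least `k` of the `C i`. -/
noncomputable def covMult {α : Type*} [BooleanAlgebra α] {m : ℕ} (C : Fin m → α) : ℕ :=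
  sSup {k : ℕ | ∀ s : Fin m → Bool, atomOf C s ≠ ⊥ →
    k ≤ (Finset.univ.filter (fun i => s i = true)).card}

/-- Kelley's covering number of a family `ℬ` in a Boolean algebra. -/
noncomputable def covNumber {α : Type*} [BooleanAlgebra α] (ℬ : Set α) : ℝ :=
  sSup { r : ℝ | ∃ n : ℕ, 0 < n ∧ ∃ C : Fin n → α,
    (∀ i, C i ∈ ℬ) ∧ r = (covMult C : ℝ) / n }

/-- The function `h_φ` associated with a submeasure `φ`. -/
noncomputable def hphi {α : Type*} [BooleanAlgebra α] (φ : α → ℝ) (ξ : ℝ) : ℝ :=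
  covNumber {A : α | φ A ≤ ξ} / ξ

/-- A submeasure on a Boolean algebra. -/
def IsSubmeasure {α : Type*} [BooleanAlgebra α] (φ : α → ℝ) : Prop :=
  φ ⊥ = 0 ∧ Monotone φ ∧ ∀ a b : α, φ (a ⊔ b) ≤ φ a + φ b

/-- A diffuse submeasure: the unit can be covered by finitely many elements of
arbitrarily small submeasure. -/
def IsDiffuse {α : Type*} [BooleanAlgebra α] (φ : α → ℝ) : Prop :=
  ∀ ε : ℝ, 0 < ε → ∃ ℬ : Finset α, ℬ.sup id = ⊤ ∧ ∀ B ∈ ℬ, φ B ≤ ε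

/-- A (nonnegative, finitely additive) measure on a Boolean algebra. -/
def IsAddMeasure {α : Type*} [BooleanAlgebra α] (μ : α → ℝ) : Prop :=
  μ ⊥ = 0 ∧ (∀ a, 0 ≤ μ a) ∧ ∀ a b : α, Disjoint a b → μ (a ⊔ b) = μ a + μ b

section AuxHphi

set_option linter.unusedSectionVars false
set_option linter.unusedVariables false

variable {α : Type*} [BooleanAlgebra α] {φ : α → ℝ}

lemma meas_mono (h : IsAddMeasure φ) : Monotone φ := by
  intro a b hab
  have h1 : a ⊔ (b \ a) = b := sup_sdiff_cancel' le_rfl hab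
  have := h.2.2 a (b \ a) disjoint_sdiff_self_right
  rw [h1] at this
  nlinarith [h.2.1 (b \ a)]

lemma foldr_le {c : α} : ∀ (L : List α), (∀ x ∈ L, x ≤ c) → L.foldr (· ⊔ ·) ⊥ ≤ c
  | [], _ => bot_le
  | a :: L, h => sup_le (h a (by simp)) (foldr_le L fun x hx => h x (by simp [hx]))

lemma le_foldr {x : α} : ∀ (L : List α), x ∈ L → x ≤ L.foldr (· ⊔ ·) ⊥
  | a :: L, h => by
    rcases List.mem_cons.1 h with rfl | h
    · exact le_sup_left
    · exact (le_foldr L h).trans le_sup_right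

lemma disjoint_foldr {x : α} : ∀ (L : List α), (∀ y ∈ L, Disjoint x y) → Disjoint x (L.foldr (· ⊔ ·) ⊥)
  | [], _ => by simp
  | a :: L, h => by
    simp only [List.foldr_cons, disjoint_sup_right]
    exact ⟨h a (by simp), disjoint_foldr L fun y hy => h y (by simp [hy])⟩

lemma meas_foldr (h : IsAddMeasure φ) :
    ∀ (L : List α), L.Pairwise Disjoint → φ (L.foldr (· ⊔ ·) ⊥) = (L.map φ).sum
  | [], _ => by simpa using h.1
  | a :: L, hp => by
    rw [List.pairwise_cons] at hp
    simp only [List.foldr_cons, List.map_cons, List.sum_cons]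
    rw [h.2.2 _ _ (disjoint_foldr L hp.1), meas_foldr h L hp.2]

lemma meas_finsetSup (h : IsAddMeasure φ) {ι : Type*} (s : Finset ι) (f : ι → α)
    (hd : (s : Set ι).Pairwise (Function.onFun Disjoint f)) : φ (s.sup f) = ∑ i ∈ s, φ (f i) := by
  induction s using Finset.cons_induction with
  | empty => simpa using h.1
  | cons a s ha ih =>
    rw [Finset.sup_cons, Finset.sum_cons]
    have hdisj : Disjoint (f a) (s.sup f) := by
      rw [Finset.disjoint_sup_right]
      intro i hi
      exact hd (by simp) (by simp [hi]) (by rintro rfl; exact ha hi)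
    rw [h.2.2 _ _ hdisj, ih (hd.mono (by simp [Finset.subset_iff]))]

lemma atomOf_le_true {m : ℕ} (C : Fin m → α) (s : Fin m → Bool) {i : Fin m} (hi : s i = true) :
    atomOf C s ≤ C i := by
  have := Finset.inf_le (f := fun i => if s i then C i else (C i)ᶜ) (Finset.mem_univ i)
  simpa [atomOf, hi] using this

lemma atomOf_le_false {m : ℕ} (C : Fin m → α) (s : Fin m → Bool) {i : Fin m} (hi : s i = false) :
    atomOf C s ≤ (C i)ᶜ := by
  have := Finset.inf_le (f := fun i => if s i then C i else (C i)ᶜ) (Finset.mem_univ i)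
  simpa [atomOf, hi] using this
  
lemma atomOf_disjoint {m : ℕ} (C : Fin m → α) {s t : Fin m → Bool} (hst : s ≠ t) :
    Disjoint (atomOf C s) (atomOf C t) := by
  obtain ⟨i, hi⟩ := Function.ne_iff.1 hst
  cases hs : s i <;> cases ht : t i
  · exact absurd (hs.trans ht.symm) hi
  · exact disjoint_compl_left.mono (atomOf_le_false C s hs) (atomOf_le_true C t ht)
  · exact disjoint_compl_right.mono (atomOf_le_true C s hs) (atomOf_le_false C t ht)
  · exact absurd (hs.trans ht.symm) hi

lemma sup_atomOf : ∀ {m : ℕ} (C : Fin m → α), Finset.univ.sup (atomOf C) = ⊤ := by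
  intro m
  induction m with
  | zero =>
    intro C
    refine top_le_iff.1 ?_
    have : atomOf C (fun i => true) = ⊤ := by simp [atomOf]
    exact this ▸ Finset.le_sup (Finset.mem_univ _)
  | succ n ih =>
    intro C
    refine top_le_iff.1 ?_
    have key : ∀ (b : Bool) (t : Fin n → Bool),
        (if b then C 0 else (C 0)ᶜ) ⊓ atomOf (C ∘ Fin.succ) t = atomOf C (Fin.cons b t) := by
      intro b t
      unfold atomOf
      rw [Fin.univ_succ, Finset.inf_cons, Finset.inf_map]
      exact congrArg₂ (· ⊓ ·) (by simp)
        (Finset.inf_congr rfl fun i _ => by simp [Function.comp, Fin.cons_succ]).symm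
    calc (⊤ : α) = (C 0 ⊔ (C 0)ᶜ) ⊓ Finset.univ.sup (atomOf (C ∘ Fin.succ)) := by
            rw [sup_compl_eq_top, ih, top_inf_eq]
    _ = (Finset.univ.sup fun t => C 0 ⊓ atomOf (C ∘ Fin.succ) t) ⊔
          (Finset.univ.sup fun t => (C 0)ᶜ ⊓ atomOf (C ∘ Fin.succ) t) := by
            rw [inf_sup_right, Finset.sup_inf_distrib_left, Finset.sup_inf_distrib_left]
    _ ≤ Finset.univ.sup (atomOf C) := by
        apply sup_le <;> refine Finset.sup_le fun t _ => ?_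
        · exact le_of_eq_of_le (key true t) (Finset.le_sup (Finset.mem_univ _))
        · exact le_of_eq_of_le (key false t) (Finset.le_sup (Finset.mem_univ _))

lemma C_eq_sup_atoms {m : ℕ} (C : Fin m → α) (i : Fin m) :
    C i = (Finset.univ.filter (fun s : Fin m → Bool => s i = true)).sup (atomOf C) := by
  have h1 : C i = Finset.univ.sup fun s : Fin m → Bool => C i ⊓ atomOf C s := by
    rw [← Finset.sup_inf_distrib_left, sup_atomOf, inf_top_eq]
  rw [h1]
  refine le_antisymm (Finset.sup_le fun s _ => ?_) (Finset.sup_le fun s hs => ?_)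
  · cases hsi : s i
    · have hb : C i ⊓ atomOf C s ≤ ⊥ :=
        le_trans (inf_le_inf_left _ (atomOf_le_false C s hsi)) (by simp)
      exact le_trans hb bot_le
    · rw [inf_eq_right.2 (atomOf_le_true C s hsi)]
      exact Finset.le_sup (Finset.mem_filter.2 ⟨Finset.mem_univ _, hsi⟩)
  · have hsi : s i = true := (Finset.mem_filter.1 hs).2
    have : atomOf C s = C i ⊓ atomOf C s := (inf_eq_right.2 (atomOf_le_true C s hsi)).symm
    rw [this]
    exact Finset.le_sup (f := fun s => C i ⊓ atomOf C s) (Finset.mem_univ s)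

lemma exists_atom_ne_bot (htop : (⊤ : α) ≠ ⊥) {m : ℕ} (C : Fin m → α) :
    ∃ s : Fin m → Bool, atomOf C s ≠ ⊥ := by
  by_contra h
  push_neg at h
  have := sup_atomOf C
  rw [(Finset.sup_eq_bot_iff _ _).2 (fun s _ => h s)] at this
  exact htop this.symm

lemma covMult_bddAbove (htop : (⊤ : α) ≠ ⊥) {m : ℕ} (C : Fin m → α) :
    BddAbove {k : ℕ | ∀ s : Fin m → Bool, atomOf C s ≠ ⊥ →
      k ≤ (Finset.univ.filter (fun i => s i = true)).card} := by
  obtain ⟨s, hs⟩ := exists_atom_ne_bot htop C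
  exact ⟨_, fun k hk => hk s hs⟩

lemma covMult_spec (htop : (⊤ : α) ≠ ⊥) {m : ℕ} (C : Fin m → α) :
    ∀ s : Fin m → Bool, atomOf C s ≠ ⊥ →
      covMult C ≤ (Finset.univ.filter (fun i => s i = true)).card := by
  have hmem : covMult C ∈ {k : ℕ | ∀ s : Fin m → Bool, atomOf C s ≠ ⊥ →
      k ≤ (Finset.univ.filter (fun i => s i = true)).card} :=
    Nat.sSup_mem ⟨0, fun s _ => Nat.zero_le _⟩ (covMult_bddAbove htop C)
  exact hmem

lemma one_le_covMult (htop : (⊤ : α) ≠ ⊥) {m : ℕ} (C : Fin m → α)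
    (hC : Finset.univ.sup C = ⊤) : 1 ≤ covMult C := by
  refine le_csSup (covMult_bddAbove htop C) ?_
  intro s hs
  rw [Nat.one_le_iff_ne_zero, ← Nat.pos_iff_ne_zero, Finset.card_pos]
  by_contra h
  rw [Finset.not_nonempty_iff_eq_empty, Finset.filter_eq_empty_iff] at h
  have hall : ∀ i, s i = false := fun i => by simpa using h (Finset.mem_univ i)
  apply hs
  have h1 : atomOf C s = Finset.univ.inf fun i => (C i)ᶜ := by
    unfold atomOf
    exact Finset.inf_congr rfl fun i _ => by simp [hall i]
  have h2 : Finset.univ.inf (fun i => (C i)ᶜ) = (⊤ : α)ᶜ := by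
    rw [← hC]
    refine le_antisymm ?_ (Finset.le_inf fun i _ => compl_le_compl (Finset.le_sup (Finset.mem_univ i)))
    rw [le_compl_iff_disjoint_right, Finset.disjoint_sup_right]
    intro i _
    exact le_compl_iff_disjoint_right.1 (Finset.inf_le (Finset.mem_univ i))
  rw [h1, h2, compl_top]

lemma meas_top_eq_sum (h : IsAddMeasure φ) {m : ℕ} (C : Fin m → α) :
    φ ⊤ = ∑ s : Fin m → Bool, φ (atomOf C s) := by
  rw [← sup_atomOf C, meas_finsetSup h]
  intro s _ t _ hst
  exact atomOf_disjoint C hst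

lemma meas_C_eq_sum (h : IsAddMeasure φ) {m : ℕ} (C : Fin m → α) (i : Fin m) :
    φ (C i) = ∑ s ∈ Finset.univ.filter (fun s : Fin m → Bool => s i = true), φ (atomOf C s) := by
  rw [C_eq_sup_atoms C i, meas_finsetSup h]
  intro s _ t _ hst
  exact atomOf_disjoint C hst

lemma sum_meas_C (h : IsAddMeasure φ) {m : ℕ} (C : Fin m → α) :
    ∑ i : Fin m, φ (C i) =
      ∑ s : Fin m → Bool, ((Finset.univ.filter (fun i => s i = true)).card : ℝ) * φ (atomOf C s) := by
  have : ∀ i : Fin m, φ (C i) = ∑ s : Fin m → Bool, if s i = true then φ (atomOf C s) else 0 := by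
    intro i
    rw [meas_C_eq_sum h C i, Finset.sum_filter]
  simp_rw [this]
  rw [Finset.sum_comm]
  refine Finset.sum_congr rfl fun s _ => ?_
  rw [← Finset.sum_filter, Finset.sum_const, nsmul_eq_mul]

lemma covMult_le (h : IsAddMeasure φ) (hpos : 0 < φ ⊤) {m : ℕ} (C : Fin m → α) :
    (covMult C : ℝ) * φ ⊤ ≤ ∑ i : Fin m, φ (C i) := by
  have htop : (⊤ : α) ≠ ⊥ := fun e => by rw [e, h.1] at hpos; exact lt_irrefl 0 hpos
  rw [sum_meas_C h C, meas_top_eq_sum h C, Finset.mul_sum]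
  refine Finset.sum_le_sum fun s _ => ?_
  by_cases hb : atomOf C s = ⊥
  · simp [hb, h.1]
  · refine mul_le_mul_of_nonneg_right ?_ (h.2.1 _)
    exact_mod_cast covMult_spec htop C s hb

lemma covSet_le (h : IsAddMeasure φ) (hpos : 0 < φ ⊤) {ξ : ℝ} (hξ : 0 < ξ) :
    ∀ r ∈ { r : ℝ | ∃ n : ℕ, 0 < n ∧ ∃ C : Fin n → α,
      (∀ i, C i ∈ {A : α | φ A ≤ ξ}) ∧ r = (covMult C : ℝ) / n }, r ≤ ξ / φ ⊤ := by
  rintro r ⟨n, hn, C, hC, rfl⟩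
  rw [div_le_div_iff₀ (by exact_mod_cast hn) hpos]
  calc (covMult C : ℝ) * φ ⊤ ≤ ∑ i : Fin n, φ (C i) := covMult_le h hpos C
  _ ≤ ∑ _i : Fin n, ξ := Finset.sum_le_sum fun i _ => hC i
  _ = ξ * n := by simp [mul_comm]

lemma covNumber_le (h : IsAddMeasure φ) (hpos : 0 < φ ⊤) {ξ : ℝ} (hξ : 0 < ξ) :
    covNumber {A : α | φ A ≤ ξ} ≤ ξ / φ ⊤ :=
  Real.sSup_le (covSet_le h hpos hξ) (div_nonneg hξ.le hpos.le)

lemma covNumber_ge (h : IsAddMeasure φ) (hpos : 0 < φ ⊤) {ξ : ℝ} (hξ : 0 < ξ)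
    {n : ℕ} (hn : 0 < n) (C : Fin n → α) (hC : ∀ i, φ (C i) ≤ ξ) :
    (covMult C : ℝ) / n ≤ covNumber {A : α | φ A ≤ ξ} :=
  le_csSup ⟨ξ / φ ⊤, fun r hr => covSet_le h hpos hξ r hr⟩ ⟨n, hn, C, fun i => hC i, rfl⟩

lemma merge (h : IsAddMeasure φ) {ε ξ : ℝ} (hε : 0 < ε) (hξ : ε < ξ) :
    ∀ L : List α, L.Pairwise Disjoint → (∀ b ∈ L, φ b ≤ ε) →
    ∃ M : List α, M.Pairwise Disjoint ∧
      M.foldr (· ⊔ ·) ⊥ = L.foldr (· ⊔ ·) ⊥ ∧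
      (∀ m ∈ M, φ m ≤ ξ) ∧ (∀ m ∈ M.tail, ξ - ε < φ m) := by
  intro L
  induction L with
  | nil => exact fun _ _ => ⟨[], by simp, rfl, by simp, by simp⟩
  | cons p L ih =>
    intro hp hb
    rw [List.pairwise_cons] at hp
    obtain ⟨M, hMd, hMs, hMle, hMt⟩ := ih hp.2 (fun b hbL => hb b (by simp [hbL]))
    have hpL : Disjoint p (L.foldr (· ⊔ ·) ⊥) := disjoint_foldr L hp.1
    have hpM : ∀ x ∈ M, Disjoint p x := fun x hx =>
      hpL.mono_right ((le_foldr M hx).trans hMs.le)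
    have hpε : φ p ≤ ε := hb p (by simp)
    match M, hMd, hMs, hMle, hMt, hpM with
    | [], _, hMs, _, _, _ =>
      refine ⟨[p], by simp, ?_, ?_, by simp⟩
      · simp only [List.foldr_cons, List.foldr_nil] at hMs ⊢
        rw [← hMs]
      · intro m hm
        rw [List.mem_singleton] at hm
        subst hm
        exact hpε.trans hξ.le
    | a :: M', hMd, hMs, hMle, hMt, hpM =>
      have hpa : Disjoint p a := hpM a (by simp)
      have hpM' : ∀ x ∈ M', Disjoint p x := fun x hx => hpM x (by simp [hx])
      rw [List.pairwise_cons] at hMd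
      by_cases hcase : φ (p ⊔ a) ≤ ξ
      · refine ⟨(p ⊔ a) :: M', ?_, ?_, ?_, ?_⟩
        · rw [List.pairwise_cons]
          exact ⟨fun x hx => disjoint_sup_left.2 ⟨hpM' x hx, hMd.1 x hx⟩, hMd.2⟩
        · simp only [List.foldr_cons] at hMs ⊢
          rw [sup_assoc, hMs]
        · intro m hm
          rcases List.mem_cons.1 hm with rfl | hm
          · exact hcase
          · exact hMle m (by simp [hm])
        · exact fun m hm => hMt m hm
      · refine ⟨p :: a :: M', ?_, ?_, ?_, ?_⟩
        · rw [List.pairwise_cons]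
          exact ⟨hpM, List.pairwise_cons.2 hMd⟩
        · simp only [List.foldr_cons] at hMs ⊢
          rw [hMs]
        · intro m hm
          rcases List.mem_cons.1 hm with rfl | hm
          · exact hpε.trans hξ.le
          · exact hMle m hm
        · intro m hm
          rcases List.mem_cons.1 hm with rfl | hm
          · have hsum := h.2.2 _ _ hpa
            push_neg at hcase
            linarith
          · exact hMt m hm

def disjList {α : Type*} [BooleanAlgebra α] : List α → List α
  | [] => []
  | a :: l => a :: (disjList l).map (· \ a)

lemma disjList_pairwise : ∀ L : List α, (disjList L).Pairwise Disjoint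
  | [] => List.Pairwise.nil
  | a :: l => by
    rw [disjList, List.pairwise_cons]
    constructor
    · intro x hx
      obtain ⟨y, _, rfl⟩ := List.mem_map.1 hx
      exact disjoint_sdiff_self_right
    · exact (disjList_pairwise l).map _ (fun x y hxy => hxy.mono sdiff_le sdiff_le)

lemma foldr_map_sdiff (a : α) : ∀ L : List α,
    (L.map (· \ a)).foldr (· ⊔ ·) ⊥ = L.foldr (· ⊔ ·) ⊥ \ a
  | [] => by simp
  | x :: L => by
    simp only [List.map_cons, List.foldr_cons, foldr_map_sdiff a L, sup_sdiff]

lemma disjList_foldr : ∀ L : List α, (disjList L).foldr (· ⊔ ·) ⊥ = L.foldr (· ⊔ ·) ⊥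
  | [] => rfl
  | a :: l => by
    rw [disjList, List.foldr_cons, foldr_map_sdiff, disjList_foldr l, List.foldr_cons,
      sup_sdiff_self_right]

lemma disjList_le : ∀ L : List α, ∀ x ∈ disjList L, ∃ b ∈ L, x ≤ b
  | a :: l, x, hx => by
    rw [disjList, List.mem_cons] at hx
    rcases hx with rfl | hx
    · exact ⟨x, by simp, le_rfl⟩
    · obtain ⟨y, hy, rfl⟩ := List.mem_map.1 hx
      obtain ⟨b, hb, hyb⟩ := disjList_le l y hy
      exact ⟨b, by simp [hb], sdiff_le.trans hyb⟩

lemma foldr_eq_sup_get : ∀ L : List α, Finset.univ.sup L.get = L.foldr (· ⊔ ·) ⊥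
  | [] => by simp
  | a :: l => by
    rw [List.foldr_cons, ← foldr_eq_sup_get l, Fin.univ_succ, Finset.sup_cons, Finset.sup_map]
    congr 1

lemma list_sum_ge {c : ℝ} : ∀ T : List α, (∀ x ∈ T, c ≤ φ x) → T.length * c ≤ (T.map φ).sum
  | [], _ => by simp
  | x :: T, h => by
    have := list_sum_ge T (fun y hy => h y (by simp [hy]))
    simp only [List.length_cons, List.map_cons, List.sum_cons]
    push_cast
    have hx := h x (by simp)
    nlinarith [hx, this]

lemma hphi_upper (h : IsAddMeasure φ) (hpos : 0 < φ ⊤) {ξ : ℝ} (hξ : 0 < ξ) :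
    hphi φ ξ ≤ 1 / φ ⊤ := by
  unfold hphi
  have h1 := covNumber_le h hpos hξ
  have h2 : ξ / φ ⊤ / ξ = 1 / φ ⊤ := by field_simp
  rw [← h2]
  gcongr

lemma hphi_lower (hmeas : IsAddMeasure φ) (hd : IsDiffuse φ) (hpos : 0 < φ ⊤)
    {ξ : ℝ} (hξ0 : 0 < ξ) (hξ1 : ξ < 1) :
    (1 - ξ) / (φ ⊤ + ξ - ξ ^ 2) ≤ hphi φ ξ := by
  have htop : (⊤ : α) ≠ ⊥ := fun e => by rw [e, hmeas.1] at hpos; exact lt_irrefl 0 hpos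
  set ε : ℝ := ξ ^ 2 with hε_def
  have hε : 0 < ε := by positivity
  have hεξ : ε < ξ := by nlinarith
  obtain ⟨ℬ, hℬsup, hℬsmall⟩ := hd ε hε
  set L₀ : List α := disjList ℬ.toList with hL₀
  have hL₀p : L₀.Pairwise Disjoint := disjList_pairwise _
  have hL₀sup : L₀.foldr (· ⊔ ·) ⊥ = ⊤ := by
    rw [hL₀, disjList_foldr, ← hℬsup]
    refine le_antisymm (foldr_le _ fun x hx => Finset.le_sup (f := id) (Finset.mem_toList.1 hx))
      (Finset.sup_le fun b hb => le_foldr _ (Finset.mem_toList.2 hb))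
  have hL₀small : ∀ b ∈ L₀, φ b ≤ ε := by
    intro b hb
    obtain ⟨c, hc, hbc⟩ := disjList_le _ b hb
    exact (meas_mono hmeas hbc).trans (hℬsmall c (Finset.mem_toList.1 hc))
  obtain ⟨M, hMp, hMsup, hMle, hMt⟩ := merge hmeas hε hεξ L₀ hL₀p hL₀small
  rw [hL₀sup] at hMsup
  -- M nonempty
  obtain ⟨a, T, rfl⟩ : ∃ a T, M = a :: T := by
    cases M with
    | nil => exact absurd (hMsup.symm.trans (by simp)) htop
    | cons a T => exact ⟨a, T, rfl⟩
  set n : ℕ := (a :: T).length with hn_def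
  have hn : 0 < n := by simp [hn_def]
  set C : Fin n → α := (a :: T).get with hC_def
  have hCsup : Finset.univ.sup C = ⊤ := by rw [hC_def, foldr_eq_sup_get, hMsup]
  have hCle : ∀ i, φ (C i) ≤ ξ := by
    intro i
    apply hMle
    rw [hC_def]
    exact (a :: T).get_mem i
  have hcov1 : 1 ≤ covMult C := one_le_covMult htop C hCsup
  have hcovN : (1 : ℝ) / n ≤ covNumber {A : α | φ A ≤ ξ} := by
    refine le_trans ?_ (covNumber_ge hmeas hpos hξ0 hn C hCle)
    have hnR : (0:ℝ) < n := by exact_mod_cast hn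
    gcongr
    exact_mod_cast hcov1
  -- bound on n
  have hφtop : φ ⊤ = ((a :: T).map φ).sum := by
    rw [← hMsup, meas_foldr hmeas _ hMp]
  have hTsum : (T.length : ℝ) * (ξ - ε) ≤ (T.map φ).sum :=
    list_sum_ge T fun x hx => (hMt x hx).le
  have hNb : ((n : ℝ) - 1) * (ξ - ε) ≤ φ ⊤ := by
    have ha : 0 ≤ φ a := hmeas.2.1 a
    rw [hφtop]
    simp only [List.map_cons, List.sum_cons, hn_def, List.length_cons]
    push_cast
    nlinarith [hTsum]
  -- final arithmetic
  have hden : 0 < φ ⊤ + ξ - ξ ^ 2 := by nlinarith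
  have hN1 : (1 : ℝ) ≤ n := by exact_mod_cast hn
  unfold hphi
  have key : (1 - ξ) / (φ ⊤ + ξ - ξ ^ 2) ≤ (1 / n) / ξ := by
    rw [div_div, div_le_div_iff₀ hden (by positivity)]
    nlinarith [hNb]
  refine key.trans ?_
  gcongr

end AuxHphi

/-- For a nonzero diffuse measure `φ`, `h_φ(ξ) → 1/φ(1)` as `ξ → 0⁺`. -/
theorem measure_hphi_tendsto {α : Type*} [BooleanAlgebra α] (φ : α → ℝ)
    (hmeas : IsAddMeasure φ) (hd : IsDiffuse φ) (hpos : 0 < φ ⊤) :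
    Filter.Tendsto (fun ξ => hphi φ ξ) (nhdsWithin 0 (Set.Ioi 0)) (nhds (1 / φ ⊤)) := by

  have hmem : ∀ᶠ ξ in nhdsWithin (0:ℝ) (Set.Ioi 0), ξ ∈ Set.Ioi (0:ℝ) :=
    eventually_mem_nhdsWithin
  have hlt1 : ∀ᶠ ξ in nhdsWithin (0:ℝ) (Set.Ioi 0), ξ < 1 :=
    (eventually_lt_nhds (by norm_num : (0:ℝ) < 1)).filter_mono nhdsWithin_le_nhds
  have hupper : ∀ᶠ ξ in nhdsWithin (0:ℝ) (Set.Ioi 0), hphi φ ξ ≤ 1 / φ ⊤ :=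
    hmem.mono fun ξ hξ => hphi_upper hmeas hpos hξ
  have hlower : ∀ᶠ ξ in nhdsWithin (0:ℝ) (Set.Ioi 0),
      (1 - ξ) / (φ ⊤ + ξ - ξ ^ 2) ≤ hphi φ ξ :=
    (hmem.and hlt1).mono fun ξ hξ => hphi_lower hmeas hd hpos hξ.1 hξ.2
  have hg : Filter.Tendsto (fun ξ : ℝ => (1 - ξ) / (φ ⊤ + ξ - ξ ^ 2))
      (nhdsWithin 0 (Set.Ioi 0)) (nhds (1 / φ ⊤)) := by
    have hc : ContinuousAt (fun ξ : ℝ => (1 - ξ) / (φ ⊤ + ξ - ξ ^ 2)) 0 := by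
      apply ContinuousAt.div
      · fun_prop
      · fun_prop
      · simpa using hpos.ne'
    have := hc.tendsto.mono_left (nhdsWithin_le_nhds (s := Set.Ioi (0:ℝ)))
    simpa using this
  exact tendsto_of_tendsto_of_tendsto_of_le_of_le' hg tendsto_const_nhds hlower hupper
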